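/- As y → 0⁺, Im ∫_{−√y}^{√y} (1 − i y + i x²)^{1/3} dx = −(4/9)·y^{3/2} + O(y^{5/2}); that is, there exist C > 0 and y₀ > 0 such that for all y ∈ (0, y₀): |Im ∫_{−√y}^{√y} (1 − i y + i x²)^{1/3} dx + (4/9)·y^{3/2}| ≤ C·y^{5/2}. -/

import Mathlib

open Complex


lemma base_deriv (t : ℝ) : HasDerivAt (fun t : ℝ => (1:ℂ) + I * t) I t := by
  simpa using ((Complex.ofRealCLM.hasDerivAt (x := t)).const_mul I).const_add 1

lemma base_slit (t : ℝ) : ((1:ℂ) + I * t) ∈ Complex.slitPlane := by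
  simp [Complex.mem_slitPlane_iff]

lemma one_le_abs_base (t : ℝ) : 1 ≤ ‖((1:ℂ) + I * t)‖ := by
  have h := Complex.abs_re_le_norm ((1:ℂ) + I * t)
  simpa using h

lemma cpow_deriv (c : ℂ) (t : ℝ) :
    HasDerivAt (fun t : ℝ => ((1:ℂ) + I * t) ^ c) (c * ((1:ℂ) + I * t) ^ (c - 1) * I) t := by
  have hg : HasDerivAt (fun z : ℂ => z ^ c) (c * ((1:ℂ) + I * t) ^ (c - 1)) ((1:ℂ) + I * t) :=
    (Complex.hasStrictDerivAt_cpow_const (base_slit t)).hasDerivAt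
  have h := HasDerivAt.scomp t hg (base_deriv t)
  have : (fun z : ℂ => z ^ c) ∘ (fun t : ℝ => (1:ℂ) + I * t) = fun t : ℝ => ((1:ℂ) + I * t) ^ c := rfl
  rw [this] at h
  exact h.congr_deriv (by rw [smul_eq_mul]; ring)

lemma abs_cpow_le_one (c : ℝ) (hc : c ≤ 0) (t : ℝ) :
    ‖((1:ℂ) + I * t) ^ ((c : ℝ) : ℂ)‖ ≤ 1 := by
  rw [Complex.norm_cpow_real]
  exact Real.rpow_le_one_of_one_le_of_nonpos (one_le_abs_base t) hc

lemma stepA (w : ℝ) : ‖((1:ℂ) + I * w) ^ (-(2:ℂ)/3) - 1‖ ≤ (2/3) * |w| := by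
  have key := Convex.norm_image_sub_le_of_norm_hasDerivWithin_le
    (f := fun t : ℝ => ((1:ℂ) + I * t) ^ (-(2:ℂ)/3))
    (f' := fun t : ℝ => (-(2:ℂ)/3) * ((1:ℂ) + I * t) ^ (-(2:ℂ)/3 - 1) * I)
    (s := Set.univ) (C := 2/3)
    (fun t _ => (cpow_deriv (-(2:ℂ)/3) t).hasDerivWithinAt)
    (fun t _ => by
      have h53 : (-(2:ℂ)/3 - 1) = ((-5/3 : ℝ) : ℂ) := by push_cast; ring
      have h23 : (-(2:ℂ)/3) = ((-2/3 : ℝ) : ℂ) := by push_cast; ring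
      rw [h53, norm_mul, norm_mul, h23, Complex.norm_real,
        Real.norm_eq_abs, Complex.norm_I, mul_one]
      have h1 := abs_cpow_le_one (-5/3) (by norm_num) t
      have h0 := norm_nonneg (((1:ℂ) + I * t) ^ (((-5/3:ℝ)):ℂ))
      rw [show |(-2/3:ℝ)| = 2/3 by norm_num]
      nlinarith)
    convex_univ (Set.mem_univ (0:ℝ)) (Set.mem_univ w)
  simpa using key

lemma stepB {y : ℝ} (hy : 0 < y) {w : ℝ} (hw : w ∈ Set.Icc (-y) 0) :
    ‖((1:ℂ) + I * w) ^ ((1:ℂ)/3) - 1 - (I/3) * w‖ ≤ (2/9) * y^2 := by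
  have key := Convex.norm_image_sub_le_of_norm_hasDerivWithin_le
    (f := fun t : ℝ => ((1:ℂ) + I * t) ^ ((1:ℂ)/3) - 1 - (I/3) * t)
    (f' := fun t : ℝ => ((1:ℂ)/3) * ((1:ℂ) + I * t) ^ ((1:ℂ)/3 - 1) * I - I/3)
    (s := Set.Icc (-y) 0) (C := (2/9) * y)
    (fun t _ => by
      have h1 := cpow_deriv ((1:ℂ)/3) t
      have h2 : HasDerivAt (fun t : ℝ => (I/3) * (t:ℂ)) (I/3) t := by
        simpa using (Complex.ofRealCLM.hasDerivAt (x := t)).const_mul (I/3)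
      exact ((h1.sub_const 1).sub h2).hasDerivWithinAt
    )
    (fun t ht => by
      show ‖((1:ℂ)/3) * ((1:ℂ) + I * t) ^ ((1:ℂ)/3 - 1) * I - I/3‖ ≤ (2/9) * y
      have h13 : ((1:ℂ)/3 - 1) = -(2:ℂ)/3 := by norm_num
      have heq : ((1:ℂ)/3) * ((1:ℂ) + I * t) ^ (-(2:ℂ)/3) * I - I/3
          = (I/3) * (((1:ℂ) + I * t) ^ (-(2:ℂ)/3) - 1) := by ring
      rw [h13, heq, norm_mul]
      have hI : ‖(I/3 : ℂ)‖ = 1/3 := by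
        rw [norm_div, Complex.norm_I]; simp
      rw [hI]
      have hA := stepA t
      have htw : |t| ≤ y := by
        rw [abs_le]; exact ⟨ht.1, le_trans ht.2 hy.le⟩
      nlinarith [norm_nonneg (((1:ℂ) + I * t) ^ (-(2:ℂ)/3) - 1)])
    (convex_Icc _ _) (Set.mem_Icc.2 ⟨neg_nonpos_of_nonneg hy.le, le_rfl⟩) hw
  have key2 : ‖((1:ℂ) + I * w) ^ ((1:ℂ)/3) - 1 - (I/3) * w‖ ≤ (2/9) * y * |w| := by
    simpa using key
  have htw : |w| ≤ y := by
    rw [abs_le]; exact ⟨hw.1, le_trans hw.2 hy.le⟩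
  calc ‖((1:ℂ) + I * w) ^ ((1:ℂ)/3) - 1 - (I/3) * w‖
      ≤ (2/9) * y * |w| := key2
    _ ≤ (2/9) * y * y := by nlinarith [abs_nonneg w]
    _ = (2/9) * y^2 := by ring

lemma imbound {y : ℝ} (hy : 0 < y) {w : ℝ} (hw : w ∈ Set.Icc (-y) 0) :
    |(((1:ℂ) + I * w) ^ ((1:ℂ)/3)).im - w/3| ≤ (2/9) * y^2 := by
  have h := stepB hy hw
  have him : (((1:ℂ) + I * w) ^ ((1:ℂ)/3) - 1 - (I/3) * w).im
      = (((1:ℂ) + I * w) ^ ((1:ℂ)/3)).im - w/3 := by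
    simp [Complex.sub_im, Complex.mul_im, Complex.div_im]
    ring
  calc |(((1:ℂ) + I * w) ^ ((1:ℂ)/3)).im - w/3|
      = |(((1:ℂ) + I * w) ^ ((1:ℂ)/3) - 1 - (I/3) * w).im| := by rw [him]
    _ ≤ ‖((1:ℂ) + I * w) ^ ((1:ℂ)/3) - 1 - (I/3) * w‖ := Complex.abs_im_le_norm _
    _ ≤ (2/9) * y^2 := h

/-- Asymptotics of the imaginary part of the action integral for the cubic non-self-adjoint
operator: `Im ∫_{−√y}^{√y} (1 − iy + ix²)^{1/3} dx = −(4/9)y^{3/2} + O(y^{5/2})`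
as `y → 0⁺` (principal branch of the cube root). -/
theorem stmt_15 :
    ∃ C y₀ : ℝ, 0 < C ∧ 0 < y₀ ∧ ∀ y ∈ Set.Ioo (0:ℝ) y₀,
      |(∫ x in -Real.sqrt y..Real.sqrt y,
          ((1:ℂ) - Complex.I * (y:ℂ) + Complex.I * (x:ℂ) ^ 2) ^ ((1:ℂ)/3)).im
        + (4/9) * y ^ ((3:ℝ)/2)| ≤ C * y ^ ((5:ℝ)/2) := by
  refine ⟨1, 1, one_pos, one_pos, fun y hy => ?_⟩
  obtain ⟨hy0, hy1⟩ := hy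
  set s := Real.sqrt y with hs_def
  have hs0 : 0 < s := Real.sqrt_pos.2 hy0
  have hsy : s ^ 2 = y := Real.sq_sqrt hy0.le
  -- rewriting the base
  have hbase : ∀ x : ℝ, ((1:ℂ) - Complex.I * (y:ℂ) + Complex.I * (x:ℂ) ^ 2)
      = (1:ℂ) + I * ((x^2 - y : ℝ) : ℂ) := fun x => by push_cast; ring
  -- continuity of integrand
  have hslit : ∀ x : ℝ, ((1:ℂ) - Complex.I * (y:ℂ) + Complex.I * (x:ℂ) ^ 2) ∈ Complex.slitPlane := by
    intro x; rw [hbase x]; exact base_slit _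
  have hcont : Continuous fun x : ℝ =>
      ((1:ℂ) - Complex.I * (y:ℂ) + Complex.I * (x:ℂ) ^ 2) ^ ((1:ℂ)/3) := by
    apply Continuous.cpow (by fun_prop) continuous_const
    intro x; exact hslit x
  have hint : IntervalIntegrable (fun x : ℝ =>
      ((1:ℂ) - Complex.I * (y:ℂ) + Complex.I * (x:ℂ) ^ 2) ^ ((1:ℂ)/3)) MeasureTheory.volume (-s) s :=
    hcont.intervalIntegrable _ _
  -- Im of integral
  have him : (∫ x in -s..s,
      ((1:ℂ) - Complex.I * (y:ℂ) + Complex.I * (x:ℂ) ^ 2) ^ ((1:ℂ)/3)).im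
      = ∫ x in -s..s, (((1:ℂ) - Complex.I * (y:ℂ) + Complex.I * (x:ℂ) ^ 2) ^ ((1:ℂ)/3)).im := by
    have := Complex.imCLM.intervalIntegral_comp_comm hint
    simpa [Complex.imCLM_apply] using this.symm
  -- split integrand
  have hpolyint : IntervalIntegrable (fun x : ℝ => (x^2 - y)/3) MeasureTheory.volume (-s) s :=
    (by fun_prop : Continuous fun x : ℝ => (x^2 - y)/3).intervalIntegrable _ _
  have himint : IntervalIntegrable (fun x : ℝ =>
      (((1:ℂ) - Complex.I * (y:ℂ) + Complex.I * (x:ℂ) ^ 2) ^ ((1:ℂ)/3)).im) MeasureTheory.volume (-s) s :=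
    (Complex.continuous_im.comp hcont).intervalIntegrable _ _
  have hsplit : (∫ x in -s..s,
      (((1:ℂ) - Complex.I * (y:ℂ) + Complex.I * (x:ℂ) ^ 2) ^ ((1:ℂ)/3)).im)
      = (∫ x in -s..s, (x^2 - y)/3)
        + ∫ x in -s..s, ((((1:ℂ) - Complex.I * (y:ℂ) + Complex.I * (x:ℂ) ^ 2) ^ ((1:ℂ)/3)).im
            - (x^2 - y)/3) := by
    rw [← intervalIntegral.integral_add hpolyint (himint.sub hpolyint)]
    congr 1; ext x; ring
  -- polynomial integral
  have hy32 : y ^ ((3:ℝ)/2) = s ^ 3 := by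
    rw [hs_def, Real.sqrt_eq_rpow, ← Real.rpow_natCast (y ^ (1/(2:ℝ))) 3, ← Real.rpow_mul hy0.le]
    norm_num
  have hy52 : y ^ ((5:ℝ)/2) = s ^ 5 := by
    rw [hs_def, Real.sqrt_eq_rpow, ← Real.rpow_natCast (y ^ (1/(2:ℝ))) 5, ← Real.rpow_mul hy0.le]
    norm_num
  have hpoly : (∫ x in -s..s, (x^2 - y)/3) = -(4/9) * y ^ ((3:ℝ)/2) := by
    have h1 : (∫ x in -s..s, (x^2 - y)/3)
        = (∫ x in -s..s, (x^2 - y)) / 3 := intervalIntegral.integral_div 3 _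
    rw [h1, intervalIntegral.integral_sub
      ((continuous_pow 2).intervalIntegrable _ _) (intervalIntegrable_const)]
    rw [integral_pow, intervalIntegral.integral_const, hy32, ← hsy]
    simp [smul_eq_mul]
    ring
  -- remainder bound
  have hrem : |∫ x in -s..s, ((((1:ℂ) - Complex.I * (y:ℂ) + Complex.I * (x:ℂ) ^ 2) ^ ((1:ℂ)/3)).im
      - (x^2 - y)/3)| ≤ (2/9) * y^2 * |s - (-s)| := by
    rw [← Real.norm_eq_abs]
    apply intervalIntegral.norm_integral_le_of_norm_le_const
    intro x hx
    rw [Real.norm_eq_abs]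
    rw [Set.uIoc_of_le (by linarith : -s ≤ s)] at hx
    have hx2 : x^2 ≤ y := by
      rw [← hsy]
      have h1 : -s ≤ x := le_of_lt hx.1
      have h2 : x ≤ s := hx.2
      nlinarith
    have hw : x^2 - y ∈ Set.Icc (-y) 0 := by
      constructor
      · nlinarith [sq_nonneg x]
      · linarith
    have := imbound hy0 hw
    rw [hbase x]
    simpa using this
  -- conclude
  rw [him, hsplit, hpoly]
  have habs : |s - (-s)| = 2 * s := by rw [_root_.abs_of_nonneg (by linarith : (0:ℝ) ≤ s - -s)]; ring
  rw [habs] at hrem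
  have hfin : (2/9) * y^2 * (2*s) = (4/9) * y ^ ((5:ℝ)/2) := by
    rw [hy52, ← hsy]; ring
  rw [hfin] at hrem
  have : y ^ ((5:ℝ)/2) ≥ 0 := Real.rpow_nonneg hy0.le _
  calc |(-(4/9) * y ^ ((3:ℝ)/2) + (∫ x in -s..s, ((((1:ℂ) - Complex.I * (y:ℂ) + Complex.I * (x:ℂ) ^ 2) ^ ((1:ℂ)/3)).im - (x^2 - y)/3))) + (4/9) * y ^ ((3:ℝ)/2)|
      = |∫ x in -s..s, ((((1:ℂ) - Complex.I * (y:ℂ) + Complex.I * (x:ℂ) ^ 2) ^ ((1:ℂ)/3)).im - (x^2 - y)/3)| := by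
        congr 1; ring
    _ ≤ (4/9) * y ^ ((5:ℝ)/2) := hrem
    _ ≤ 1 * y ^ ((5:ℝ)/2) := by linarith
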